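/- Let 0 → C^• →(i) K^• → L^• → 0 be a degreewise short exact sequence of cochain complexes over an abelian category 𝒜, and suppose that i : C^• → K^• is a quasi-isomorphism (equivalently, L^• is acyclic). Then for each n ∈ ℤ the induced sequence of coboundary objects 0 → B^n(C) → B^n(K) → B^n(L) → 0 is short exact, where B^n(−) denotes the image of the differential d^{n−1}. -/

import Mathlib

open CategoryTheory CategoryTheory.Limits

lemma aux_exactAt
    {𝒜 : Type*} [Category 𝒜] [Abelian 𝒜]
    (C K L : CochainComplex 𝒜 ℤ) (i : C ⟶ K) (p : K ⟶ L)
    (w : ∀ n : ℤ, i.f n ≫ p.f n = 0)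
    (hses : ∀ n : ℤ, (ShortComplex.mk (i.f n) (p.f n) (w n)).ShortExact)
    (hqis : QuasiIso i) (m : ℤ) : L.ExactAt m := by
  let S : ShortComplex (CochainComplex 𝒜 ℤ) :=
    ShortComplex.mk i p (by ext n; exact w n)
  have hS : S.ShortExact :=
    HomologicalComplex.shortExact_of_degreewise_shortExact S (fun n => hses n)
  have hiso : ∀ k : ℤ, IsIso (HomologicalComplex.homologyMap i k) := by
    intro k
    have : QuasiIsoAt i k := hqis.quasiIsoAt k
    exact (quasiIsoAt_iff_isIso_homologyMap i k).1 this
  have hrel : (ComplexShape.up ℤ).Rel m (m + 1) := rfl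
  have h2 := hS.homology_exact₂ m
  have hp0 : HomologicalComplex.homologyMap p m = 0 := by
    have := hiso m
    exact h2.epi_f_iff.1 inferInstance
  have h3 := hS.homology_exact₃ m (m + 1) hrel
  have hδmono : Mono (hS.δ m (m + 1) hrel) := h3.mono_g hp0
  have h1 := hS.homology_exact₁ m (m + 1) hrel
  have hδ0 : hS.δ m (m + 1) hrel = 0 := by
    have := hiso (m + 1)
    exact h1.mono_g_iff.1 inferInstance
  rw [HomologicalComplex.exactAt_iff_isZero_homology]
  exact IsZero.of_mono_eq_zero _ hδ0

theorem boundaries_shortExact_of_qis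
    {𝒜 : Type*} [Category 𝒜] [Abelian 𝒜]
    (C K L : CochainComplex 𝒜 ℤ) (i : C ⟶ K) (p : K ⟶ L)
    (w : ∀ n : ℤ, i.f n ≫ p.f n = 0)
    (hses : ∀ n : ℤ, (ShortComplex.mk (i.f n) (p.f n) (w n)).ShortExact)
    (hqis : QuasiIso i) :
    ∀ n : ℤ, ∃ w0 :
        image.map (Arrow.homMk (f := Arrow.mk (C.d (n - 1) n)) (g := Arrow.mk (K.d (n - 1) n))
            (u := i.f (n - 1)) (v := i.f n) (i.comm (n - 1) n)) ≫
          image.map (Arrow.homMk (f := Arrow.mk (K.d (n - 1) n)) (g := Arrow.mk (L.d (n - 1) n))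
            (u := p.f (n - 1)) (v := p.f n) (p.comm (n - 1) n)) = 0,
      (ShortComplex.mk
        (image.map (Arrow.homMk (f := Arrow.mk (C.d (n - 1) n)) (g := Arrow.mk (K.d (n - 1) n))
            (u := i.f (n - 1)) (v := i.f n) (i.comm (n - 1) n)))
        (image.map (Arrow.homMk (f := Arrow.mk (K.d (n - 1) n)) (g := Arrow.mk (L.d (n - 1) n))
            (u := p.f (n - 1)) (v := p.f n) (p.comm (n - 1) n)))
        w0).ShortExact := by
  intro n
  set sqCK : Arrow.mk (C.d (n - 1) n) ⟶ Arrow.mk (K.d (n - 1) n) :=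
    Arrow.homMk (u := i.f (n - 1)) (v := i.f n) (i.comm (n - 1) n) with hsqCK
  set sqKL : Arrow.mk (K.d (n - 1) n) ⟶ Arrow.mk (L.d (n - 1) n) :=
    Arrow.homMk (u := p.f (n - 1)) (v := p.f n) (p.comm (n - 1) n) with hsqKL
  have h_ιCK : image.map sqCK ≫ image.ι (K.d (n - 1) n) =
      image.ι (C.d (n - 1) n) ≫ i.f n := image.map_ι sqCK
  have h_ιKL : image.map sqKL ≫ image.ι (L.d (n - 1) n) =
      image.ι (K.d (n - 1) n) ≫ p.f n := image.map_ι sqKL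
  have h_fCK : factorThruImage (C.d (n - 1) n) ≫ image.map sqCK =
      i.f (n - 1) ≫ factorThruImage (K.d (n - 1) n) := image.factor_map sqCK
  have h_fKL : factorThruImage (K.d (n - 1) n) ≫ image.map sqKL =
      p.f (n - 1) ≫ factorThruImage (L.d (n - 1) n) := image.factor_map sqKL
  have hmono_i : ∀ m : ℤ, Mono (i.f m) := fun m => (hses m).mono_f
  have hepi_p : ∀ m : ℤ, Epi (p.f m) := fun m => (hses m).epi_g
  -- composition is zero
  have w0 : image.map sqCK ≫ image.map sqKL = 0 := by
    rw [← cancel_mono (image.ι (L.d (n - 1) n)), Category.assoc, h_ιKL, zero_comp,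
      ← Category.assoc, h_ιCK, Category.assoc, w n, comp_zero]
  refine ⟨w0, ?_⟩
  -- mono
  have hmono : Mono (image.map sqCK) := by
    have := hmono_i n
    have : Mono (image.map sqCK ≫ image.ι (K.d (n - 1) n)) := by
      rw [h_ιCK]; exact mono_comp _ _
    exact mono_of_mono _ (image.ι (K.d (n - 1) n))
  -- epi
  have hepi : Epi (image.map sqKL) := by
    have := hepi_p (n - 1)
    have : Epi (factorThruImage (K.d (n - 1) n) ≫ image.map sqKL) := by
      rw [h_fKL]; exact epi_comp _ _
    exact epi_of_epi (factorThruImage (K.d (n - 1) n)) _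
  -- exactness
  have hLex : (L.sc' (n - 2) (n - 1) n).Exact := by
    have h := aux_exactAt C K L i p w hses hqis (n - 1)
    rw [L.exactAt_iff' (n - 2) (n - 1) n (by rw [CochainComplex.prev]; ring)
      (by rw [CochainComplex.next]; ring)] at h
    exact h
  have hKLex : (ShortComplex.mk (i.f (n - 1)) (p.f (n - 1)) (w (n - 1))).Exact :=
    (hses (n - 1)).exact
  have hexact : (ShortComplex.mk (image.map sqCK) (image.map sqKL) w0).Exact := by
    rw [ShortComplex.exact_iff_exact_up_to_refinements]
    intro A b hb
    have hb' : b ≫ image.map sqKL = 0 := hb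
    obtain ⟨A₁, π₁, hπ₁, y, hy⟩ :=
      surjective_up_to_refinements_of_epi (factorThruImage (K.d (n - 1) n)) b
    have hz0 : (y ≫ p.f (n - 1)) ≫ factorThruImage (L.d (n - 1) n) = 0 := by
      rw [Category.assoc, ← h_fKL, ← Category.assoc, ← hy, Category.assoc, hb', comp_zero]
    have h2 : (y ≫ p.f (n - 1)) ≫ L.d (n - 1) n = 0 := by
      rw [← image.fac (L.d (n - 1) n), ← Category.assoc, hz0, zero_comp]
    obtain ⟨A₂, π₂, hπ₂, z, hz⟩ := hLex.exact_up_to_refinements (y ≫ p.f (n - 1)) h2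
    change A₂ ⟶ L.X (n - 2) at z
    change _ = z ≫ L.d (n - 2) (n - 1) at hz
    obtain ⟨A₃, π₃, hπ₃, v, hv⟩ :=
      @surjective_up_to_refinements_of_epi _ _ _ _ _ (p.f (n - 2)) (hepi_p (n - 2)) _ z
    set r : A₃ ⟶ K.X (n - 1) := π₃ ≫ π₂ ≫ y - v ≫ K.d (n - 2) (n - 1) with hr
    have hkey : v ≫ K.d (n - 2) (n - 1) ≫ p.f (n - 1) = π₃ ≫ π₂ ≫ y ≫ p.f (n - 1) := by
      calc v ≫ K.d (n - 2) (n - 1) ≫ p.f (n - 1)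
          = v ≫ p.f (n - 2) ≫ L.d (n - 2) (n - 1) := by rw [← p.comm]
        _ = (v ≫ p.f (n - 2)) ≫ L.d (n - 2) (n - 1) := by rw [Category.assoc]
        _ = (π₃ ≫ z) ≫ L.d (n - 2) (n - 1) := by rw [← hv]
        _ = π₃ ≫ z ≫ L.d (n - 2) (n - 1) := by rw [Category.assoc]
        _ = π₃ ≫ π₂ ≫ y ≫ p.f (n - 1) := by rw [← hz]; rfl
    have hrp : r ≫ p.f (n - 1) = 0 := by
      rw [hr, Preadditive.sub_comp]
      simp only [Category.assoc]
      rw [hkey, sub_self]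
    obtain ⟨A₄, π₄, hπ₄, u, hu⟩ := hKLex.exact_up_to_refinements r hrp
    dsimp at u hu
    refine ⟨A₄, π₄ ≫ π₃ ≫ π₂ ≫ π₁, inferInstance,
      u ≫ factorThruImage (C.d (n - 1) n), ?_⟩
    show (π₄ ≫ π₃ ≫ π₂ ≫ π₁) ≫ b =
      (u ≫ factorThruImage (C.d (n - 1) n)) ≫ image.map sqCK
    rw [← cancel_mono (image.ι (K.d (n - 1) n))]
    calc ((π₄ ≫ π₃ ≫ π₂ ≫ π₁) ≫ b) ≫ image.ι (K.d (n - 1) n)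
        = π₄ ≫ π₃ ≫ π₂ ≫ (π₁ ≫ b) ≫ image.ι (K.d (n - 1) n) := by
          simp only [Category.assoc]
      _ = π₄ ≫ π₃ ≫ π₂ ≫ (y ≫ factorThruImage (K.d (n - 1) n)) ≫
            image.ι (K.d (n - 1) n) := by rw [hy]
      _ = π₄ ≫ π₃ ≫ π₂ ≫ y ≫ K.d (n - 1) n := by
          simp only [Category.assoc, image.fac]
      _ = π₄ ≫ r ≫ K.d (n - 1) n := by
          rw [hr, Preadditive.sub_comp]
          simp only [Category.assoc, HomologicalComplex.d_comp_d, comp_zero, sub_zero]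
      _ = (π₄ ≫ r) ≫ K.d (n - 1) n := by rw [Category.assoc]
      _ = (u ≫ i.f (n - 1)) ≫ K.d (n - 1) n := by rw [hu]
      _ = u ≫ C.d (n - 1) n ≫ i.f n := by rw [Category.assoc, i.comm]
      _ = u ≫ (factorThruImage (C.d (n - 1) n) ≫ image.ι (C.d (n - 1) n)) ≫ i.f n := by
          rw [image.fac]
      _ = (u ≫ factorThruImage (C.d (n - 1) n)) ≫ image.ι (C.d (n - 1) n) ≫ i.f n := by
          simp only [Category.assoc]
      _ = (u ≫ factorThruImage (C.d (n - 1) n)) ≫ image.map sqCK ≫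
            image.ι (K.d (n - 1) n) := by rw [h_ιCK]
      _ = ((u ≫ factorThruImage (C.d (n - 1) n)) ≫ image.map sqCK) ≫
            image.ι (K.d (n - 1) n) := by simp only [Category.assoc]
  exact { exact := hexact, mono_f := hmono, epi_g := hepi }
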